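/- There is a ring isomorphism ℤ[x, y, z₁, z₂]/I ≅ ℤ[x, y]/((x+y)(x²+y²), x⁴, y⁴), where I is the ideal generated by the homogeneous components of positive degree of (1+x)(1+y)(1+z₁+z₂) − 1, namely I = (x + y + z₁, z₂ + xy + x z₁ + y z₁, y z₂ + x z₂ + x y z₁, x y z₂), and the isomorphism sends x ↦ x and y ↦ y. -/

import Mathlib

open MvPolynomial

private lemma mem_span3 {R : Type*} [CommRing R] (j1 j2 j3 a b c : R) :
    a * j1 + b * j2 + c * j3 ∈ Ideal.span {j1, j2, j3} := by
  have h1 : j1 ∈ Ideal.span {j1, j2, j3} := Ideal.subset_span (by simp)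
  have h2 : j2 ∈ Ideal.span {j1, j2, j3} := Ideal.subset_span (by simp)
  have h3 : j3 ∈ Ideal.span {j1, j2, j3} := Ideal.subset_span (by simp)
  exact add_mem (add_mem (Ideal.mul_mem_left _ a h1) (Ideal.mul_mem_left _ b h2))
    (Ideal.mul_mem_left _ c h3)

private lemma mem_span4 {R : Type*} [CommRing R] (j1 j2 j3 j4 a b c d : R) :
    a * j1 + b * j2 + c * j3 + d * j4 ∈ Ideal.span {j1, j2, j3, j4} := by
  have h1 : j1 ∈ Ideal.span {j1, j2, j3, j4} := Ideal.subset_span (by simp)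
  have h2 : j2 ∈ Ideal.span {j1, j2, j3, j4} := Ideal.subset_span (by simp)
  have h3 : j3 ∈ Ideal.span {j1, j2, j3, j4} := Ideal.subset_span (by simp)
  have h4 : j4 ∈ Ideal.span {j1, j2, j3, j4} := Ideal.subset_span (by simp)
  exact add_mem (add_mem (add_mem (Ideal.mul_mem_left _ a h1) (Ideal.mul_mem_left _ b h2))
    (Ideal.mul_mem_left _ c h3)) (Ideal.mul_mem_left _ d h4)

/-- The integral cohomology ring of the flag manifold `Fl(1,2,4)`:
`ℤ[x, y, z₁, z₂]/I ≅ ℤ[x, y]/((x+y)(x²+y²), x⁴, y⁴)`, where `I` is generated by the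
homogeneous components of positive degree of `(1+x)(1+y)(1+z₁+z₂) − 1`, and the
isomorphism sends `x ↦ x`, `y ↦ y`. -/
theorem flag_cohomology_presentation :
    let x : MvPolynomial (Fin 4) ℤ := X 0
    let y : MvPolynomial (Fin 4) ℤ := X 1
    let z1 : MvPolynomial (Fin 4) ℤ := X 2
    let z2 : MvPolynomial (Fin 4) ℤ := X 3
    let I : Ideal (MvPolynomial (Fin 4) ℤ) :=
      Ideal.span {x + y + z1, z2 + x * y + x * z1 + y * z1, y * z2 + x * z2 + x * y * z1,
        x * y * z2}
    let J : Ideal (MvPolynomial (Fin 2) ℤ) :=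
      Ideal.span {(X 0 + X 1) * ((X 0) ^ 2 + (X 1) ^ 2), (X 0) ^ 4, (X 1) ^ 4}
    ∃ e : (MvPolynomial (Fin 4) ℤ ⧸ I) ≃+* (MvPolynomial (Fin 2) ℤ ⧸ J),
      e (Ideal.Quotient.mk I x) = Ideal.Quotient.mk J (X 0) ∧
      e (Ideal.Quotient.mk I y) = Ideal.Quotient.mk J (X 1) := by
  intro x y z1 z2 I J
  -- the forward substitution
  let u : MvPolynomial (Fin 2) ℤ := X 0
  let v : MvPolynomial (Fin 2) ℤ := X 1
  set F : MvPolynomial (Fin 4) ℤ →+* MvPolynomial (Fin 2) ℤ :=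
    (aeval ![u, v, -(u + v), u ^ 2 + u * v + v ^ 2] : _ →ₐ[ℤ] _).toRingHom with hF
  set G : MvPolynomial (Fin 2) ℤ →+* MvPolynomial (Fin 4) ℤ :=
    (aeval ![x, y] : _ →ₐ[ℤ] _).toRingHom with hG
  have hFx : F x = u := by simp [hF, x]
  have hFy : F y = v := by simp [hF, y]
  have hFz1 : F z1 = -(u + v) := by simp [hF, z1]
  have hFz2 : F z2 = u ^ 2 + u * v + v ^ 2 := by simp [hF, z2]
  have hGu : G u = x := by simp [hG, u, x]
  have hGv : G v = y := by simp [hG, v, y]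
  -- F kills I
  have hFI : ∀ a ∈ I, Ideal.Quotient.mk J (F a) = 0 := by
    have hle : I ≤ Ideal.comap F J := by
      rw [Ideal.span_le]
      rintro p hp
      simp only [Set.mem_insert_iff, Set.mem_singleton_iff] at hp
      rcases hp with rfl | rfl | rfl | rfl <;>
        simp only [SetLike.mem_coe, Ideal.mem_comap, map_add, map_mul, hFx, hFy, hFz1, hFz2]
      · have h : u + v + -(u + v) = (0 : MvPolynomial (Fin 2) ℤ) := by ring
        rw [h]; exact zero_mem J
      · have h : u ^ 2 + u * v + v ^ 2 + u * v + u * -(u + v) + v * -(u + v) =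
            (0 : MvPolynomial (Fin 2) ℤ) := by ring
        rw [h]; exact zero_mem J
      · have h : v * (u ^ 2 + u * v + v ^ 2) + u * (u ^ 2 + u * v + v ^ 2) +
            u * v * -(u + v) =
            1 * ((u + v) * (u ^ 2 + v ^ 2)) + 0 * (u ^ 4) + 0 * (v ^ 4) := by ring
        rw [h]; exact mem_span3 _ _ _ _ _ _
      · have h : u * v * (u ^ 2 + u * v + v ^ 2) =
            u * ((u + v) * (u ^ 2 + v ^ 2)) + (-1) * (u ^ 4) + 0 * (v ^ 4) := by ring
        rw [h]; exact mem_span3 _ _ _ _ _ _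
    intro a ha
    exact Ideal.Quotient.eq_zero_iff_mem.mpr (hle ha)
  -- G kills J
  have hGJ : ∀ a ∈ J, Ideal.Quotient.mk I (G a) = 0 := by
    have hle : J ≤ Ideal.comap G I := by
      rw [Ideal.span_le]
      rintro p hp
      simp only [Set.mem_insert_iff, Set.mem_singleton_iff] at hp
      rcases hp with rfl | rfl | rfl <;>
        simp only [SetLike.mem_coe, Ideal.mem_comap, map_add, map_mul, map_pow, hGu, hGv]
      · have h : (x + y) * (x ^ 2 + y ^ 2) =
            ((x + y) ^ 2 - x * y) * (x + y + z1) + (-(x + y)) * (z2 + x * y + x * z1 + y * z1)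
              + 1 * (y * z2 + x * z2 + x * y * z1) + 0 * (x * y * z2) := by ring
        rw [show G (X 0) = x from hGu, show G (X 1) = y from hGv, h]; exact mem_span4 _ _ _ _ _ _ _ _
      · have h : x ^ 4 =
            (x * ((x + y) ^ 2 - x * y) - x * y * (x + y)) * (x + y + z1) +
              (-(x * (x + y)) + x * y) * (z2 + x * y + x * z1 + y * z1) +
              x * (y * z2 + x * z2 + x * y * z1) + (-1) * (x * y * z2) := by ring
        rw [show G (X 0) = x from hGu, h]; exact mem_span4 _ _ _ _ _ _ _ _
      · have h : y ^ 4 =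
            (y * ((x + y) ^ 2 - x * y) - x * y * (x + y)) * (x + y + z1) +
              (-(y * (x + y)) + x * y) * (z2 + x * y + x * z1 + y * z1) +
              y * (y * z2 + x * z2 + x * y * z1) + (-1) * (x * y * z2) := by ring
        rw [show G (X 1) = y from hGv, h]; exact mem_span4 _ _ _ _ _ _ _ _
    intro a ha
    exact Ideal.Quotient.eq_zero_iff_mem.mpr (hle ha)
  set φ : (MvPolynomial (Fin 4) ℤ ⧸ I) →+* (MvPolynomial (Fin 2) ℤ ⧸ J) :=
    Ideal.Quotient.lift I ((Ideal.Quotient.mk J).comp F) (fun a ha => hFI a ha) with hφ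
  set ψ : (MvPolynomial (Fin 2) ℤ ⧸ J) →+* (MvPolynomial (Fin 4) ℤ ⧸ I) :=
    Ideal.Quotient.lift J ((Ideal.Quotient.mk I).comp G) (fun a ha => hGJ a ha) with hψ
  have hφmk : ∀ p, φ (Ideal.Quotient.mk I p) = Ideal.Quotient.mk J (F p) := fun p => rfl
  have hψmk : ∀ p, ψ (Ideal.Quotient.mk J p) = Ideal.Quotient.mk I (G p) := fun p => rfl
  have h1 : φ.comp ψ = RingHom.id _ := by
    apply Ideal.Quotient.ringHom_ext
    apply MvPolynomial.ringHom_ext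
    · intro a
      simp only [RingHom.comp_apply, RingHom.id_apply]
      rw [eq_intCast (C : ℤ →+* MvPolynomial (Fin 2) ℤ) a]
      simp only [map_intCast]
    · intro i
      fin_cases i <;> simp only [RingHom.comp_apply, RingHom.id_apply, Fin.isValue]
      · rw [hψmk]
        show φ (Ideal.Quotient.mk I (G (X 0))) = Ideal.Quotient.mk J (X 0)
        rw [hGu, hφmk, hFx]
      · rw [hψmk]
        show φ (Ideal.Quotient.mk I (G (X 1))) = Ideal.Quotient.mk J (X 1)
        rw [hGv, hφmk, hFy]
  have h2 : ψ.comp φ = RingHom.id _ := by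
    apply Ideal.Quotient.ringHom_ext
    apply MvPolynomial.ringHom_ext
    · intro a
      simp only [RingHom.comp_apply, RingHom.id_apply]
      rw [eq_intCast (C : ℤ →+* MvPolynomial (Fin 4) ℤ) a]
      simp only [map_intCast]
    · intro i
      fin_cases i <;> simp only [RingHom.comp_apply, RingHom.id_apply, Fin.isValue]
      · show ψ (Ideal.Quotient.mk J (F (X 0))) = Ideal.Quotient.mk I (X 0)
        rw [show F (X 0) = u from hFx, hψmk, hGu]
      · show ψ (Ideal.Quotient.mk J (F (X 1))) = Ideal.Quotient.mk I (X 1)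
        rw [show F (X 1) = v from hFy, hψmk, hGv]
      · show ψ (Ideal.Quotient.mk J (F (X 2))) = Ideal.Quotient.mk I (X 2)
        rw [show F (X 2) = -(u + v) from hFz1, hψmk]
        rw [Ideal.Quotient.mk_eq_mk_iff_sub_mem]
        have h : G (-(u + v)) - X 2 =
            (-1) * (x + y + z1) + 0 * (z2 + x * y + x * z1 + y * z1) +
              0 * (y * z2 + x * z2 + x * y * z1) + 0 * (x * y * z2) := by
          simp only [map_neg, map_add, hGu, hGv]; simp only [x, y, z1, z2, u, v]; ring
        rw [h]; exact mem_span4 _ _ _ _ _ _ _ _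
      · show ψ (Ideal.Quotient.mk J (F (X 3))) = Ideal.Quotient.mk I (X 3)
        rw [show F (X 3) = u ^ 2 + u * v + v ^ 2 from hFz2, hψmk]
        rw [Ideal.Quotient.mk_eq_mk_iff_sub_mem]
        have h : G (u ^ 2 + u * v + v ^ 2) - X 3 =
            (x + y) * (x + y + z1) + (-1) * (z2 + x * y + x * z1 + y * z1) +
              0 * (y * z2 + x * z2 + x * y * z1) + 0 * (x * y * z2) := by
          simp only [map_add, map_mul, map_pow, hGu, hGv]; simp only [x, y, z1, z2, u, v]; ring
        rw [h]; exact mem_span4 _ _ _ _ _ _ _ _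
  refine ⟨RingEquiv.ofRingHom φ ψ h1 h2, ?_, ?_⟩
  · show φ (Ideal.Quotient.mk I x) = _
    rw [hφmk, hFx]
  · show φ (Ideal.Quotient.mk I y) = _
    rw [hφmk, hFy]
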